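/- For 0 < α < 1, the coefficients of the power series of h(x) = 2^(-α)((1+x)^α - (1-x²)^α) are all nonnegative and sum to 1 (i.e., h defines a probability distribution on the positive integers, since h(1) = 2^(-α)·2^α = 1). -/

import Mathlib

open Finset Filter Set Topology

/-- Generalized binomial coefficient C(α, n) = α(α-1)⋯(α-n+1)/n! for real α. -/
noncomputable def genBinom (α : ℝ) (n : ℕ) : ℝ :=
  (∏ i ∈ Finset.range n, (α - i)) / n.factorial

lemma genBinom_zero (α : ℝ) : genBinom α 0 = 1 := by simp [genBinom]

lemma genBinom_succ (α : ℝ) (n : ℕ) :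
    genBinom α (n + 1) = genBinom α n * (α - n) / (n + 1) := by
  have h1 : ((n+1).factorial : ℝ) = (n+1) * n.factorial := by
    rw [Nat.factorial_succ]; push_cast; ring
  have h2 : (n.factorial : ℝ) ≠ 0 := Nat.cast_ne_zero.mpr n.factorial_ne_zero
  have h3 : ((n:ℝ) + 1) ≠ 0 := by positivity
  simp only [genBinom, Finset.prod_range_succ, h1]
  rw [div_mul_eq_mul_div, div_div, mul_comm (↑n.factorial : ℝ) ((n:ℝ)+1)]

/-- Pascal's rule for generalized binomial coefficients. -/
lemma genBinom_pascal (α : ℝ) (n : ℕ) :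
    genBinom α (n + 1) = genBinom (α - 1) (n + 1) + genBinom (α - 1) n := by
  have h1 : ((n+1).factorial : ℝ) = (n+1) * n.factorial := by
    rw [Nat.factorial_succ]; push_cast; ring
  have h2 : (n.factorial : ℝ) ≠ 0 := Nat.cast_ne_zero.mpr n.factorial_ne_zero
  have h3 : ((n:ℝ) + 1) ≠ 0 := by positivity
  have key : ∏ i ∈ range (n+1), (α - i) = α * ∏ i ∈ range n, (α - 1 - i) := by
    rw [Finset.prod_range_succ']
    simp only [Nat.cast_zero, sub_zero]
    rw [mul_comm]
    congr 1
    apply Finset.prod_congr rfl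
    intro i _
    push_cast
    ring
  simp only [genBinom, key, Finset.prod_range_succ, h1]
  field_simp
  ring
section
variable {α : ℝ}

/-- `D α n = |C(α, n+1)|` via explicit sign. -/
noncomputable def D (α : ℝ) (n : ℕ) : ℝ := (-1) ^ n * genBinom α (n + 1)

lemma genBinom_eq_D (α : ℝ) (n : ℕ) : genBinom α (n + 1) = (-1) ^ n * D α n := by
  simp [D, ← mul_assoc, ← mul_pow]

lemma D_zero (α : ℝ) : D α 0 = α := by simp [D, genBinom]

lemma D_succ (α : ℝ) (n : ℕ) : D α (n + 1) = D α n * ((n + 1) - α) / (n + 2) := by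
  simp only [D, genBinom_succ, pow_succ]
  push_cast
  ring

lemma D_pos (hα0 : 0 < α) (hα1 : α < 1) (n : ℕ) : 0 < D α n := by
  induction n with
  | zero => simpa [D_zero]
  | succ n ih =>
    rw [D_succ]
    have h1 : (0:ℝ) < (n+1:ℝ) - α := by
      have : α < (n:ℝ) + 1 := lt_of_lt_of_le hα1 (by push_cast; linarith [Nat.cast_nonneg (α := ℝ) n])
      linarith
    positivity

lemma D_antitone (hα0 : 0 < α) (hα1 : α < 1) : Antitone (D α) := by
  apply antitone_nat_of_succ_le
  intro n
  rw [D_succ]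
  have hD := D_pos hα0 hα1 n
  rw [div_le_iff₀ (by positivity)]
  nlinarith

lemma D_le (hα0 : 0 < α) (hα1 : α < 1) (n : ℕ) : D α n ≤ α / (n + 1) := by
  induction n with
  | zero => simp [D_zero]
  | succ n ih =>
    rw [D_succ, div_le_div_iff₀ (by positivity) (by positivity)]
    have hD := D_pos hα0 hα1 n
    have h2 : D α n * ((n+1) - α) ≤ D α n * (n+1) := by nlinarith
    have h3 : D α n * (n+1) ≤ α := by
      rw [← le_div_iff₀ (by positivity)]; exact ih
    push_cast
    nlinarith

end
/-- Coefficients of h(x) = 2^{-α}((1+x)^α - (1-x²)^α). -/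
noncomputable def hcoeff (α : ℝ) (m : ℕ) : ℝ :=
  (2 : ℝ) ^ (-α) *
    (if m = 0 then 0
     else if m % 2 = 1 then genBinom α m
     else genBinom α m - (-1 : ℝ) ^ (m / 2) * genBinom α (m / 2))

lemma hcoeff_nonneg {α : ℝ} (hα0 : 0 < α) (hα1 : α < 1) (m : ℕ) : 0 ≤ hcoeff α m := by
  have h2 : (0:ℝ) < (2:ℝ) ^ (-α) := Real.rpow_pos_of_pos (by norm_num) _
  unfold hcoeff
  apply mul_nonneg h2.le
  rcases Nat.eq_zero_or_pos m with hm | hm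
  · simp [hm]
  rcases Nat.even_or_odd m with he | ho
  · -- m even, m ≥ 2 : m = 2n+2
    obtain ⟨n, hn⟩ : ∃ n, m = 2 * n + 2 := by
      obtain ⟨k, hk⟩ := he
      refine ⟨k - 1, by omega⟩
    subst hn
    have hne : 2*n+2 ≠ 0 := by omega
    have hmod : (2*n+2) % 2 ≠ 1 := by omega
    have hdiv : (2*n+2) / 2 = n + 1 := by omega
    simp only [hne, if_false, if_neg hmod, hdiv]
    have e1 : genBinom α (2*n+2) = -D α (2*n+1) := by
      rw [show 2*n+2 = (2*n+1)+1 by ring, genBinom_eq_D, pow_succ, pow_mul]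
      simp
    have e2 : (-1:ℝ)^(n+1) * genBinom α (n+1) = -D α n := by
      rw [genBinom_eq_D, ← mul_assoc, ← pow_add,
        show n + 1 + n = 2*n+1 by ring, pow_succ, pow_mul]
      simp
    rw [e1, e2]
    have := D_antitone hα0 hα1 (show n ≤ 2*n+1 by omega)
    linarith
  · obtain ⟨j, hj⟩ := ho
    subst hj
    have hne : 2*j+1 ≠ 0 := by omega
    have hmod : (2*j+1) % 2 = 1 := by omega
    simp only [hne, if_false, if_pos hmod]
    rw [genBinom_eq_D, pow_mul]
    simp only [neg_neg, neg_one_sq, one_pow, one_mul]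
    exact (D_pos hα0 hα1 _).le

/-- Closed form for the alternating partial sums. -/
lemma alt_sum (α : ℝ) (n : ℕ) :
    ∑ j ∈ range n, (-1:ℝ)^(j+1) * genBinom α (j+1) = (-1)^n * genBinom (α-1) n - 1 := by
  induction n with
  | zero => simp [genBinom_zero]
  | succ n ih =>
    rw [Finset.sum_range_succ, ih, genBinom_pascal]
    ring

/-- Sign and product form of `C(α-1, n)`. -/
lemma gb_shift (α : ℝ) (n : ℕ) :
    (-1:ℝ)^n * genBinom (α-1) n = ∏ i ∈ range n, (((i:ℝ)+1-α) / ((i:ℝ)+1)) := by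
  rw [genBinom, ← Finset.prod_range_add_one_eq_factorial n]
  push_cast
  rw [Finset.prod_div_distrib,
    show ((-1:ℝ))^n = ∏ _i ∈ range n, (-1:ℝ) by simp,
    ← mul_div_assoc, ← Finset.prod_mul_distrib]
  congr 1
  apply Finset.prod_congr rfl
  intro i _
  ring
section TaylorPart

lemma contDiffOn_f (α : ℝ) (n : ℕ) :
    ContDiffOn ℝ n (fun t : ℝ => (1+t) ^ α) (Icc (0:ℝ) 1) := by
  intro x hx
  have h1 : (1:ℝ) + x ≠ 0 := by have := hx.1; positivity
  exact ((Real.contDiffAt_rpow_const_of_ne (p := α) h1).comp x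
    ((contDiff_const.add contDiff_id).contDiffAt)).contDiffWithinAt

lemma iter_deriv (α : ℝ) (n : ℕ) :
    ∀ x ∈ Icc (0:ℝ) 1, iteratedDerivWithin n (fun t : ℝ => (1+t) ^ α) (Icc (0:ℝ) 1) x
      = (∏ i ∈ range n, (α - i)) * (1+x) ^ (α - n) := by
  induction n with
  | zero => intro x hx; simp
  | succ n ih =>
    intro x hx
    have h1 : (0:ℝ) < 1 + x := by have := hx.1; linarith
    have hu : UniqueDiffWithinAt ℝ (Icc (0:ℝ) 1) x := (uniqueDiffOn_Icc one_pos) x hx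
    rw [iteratedDerivWithin_succ,
      derivWithin_congr (fun y hy => ih y hy) (ih x hx)]
    have hd : HasDerivAt (fun y : ℝ => (∏ i ∈ range n, (α - i)) * (1+y) ^ (α - n))
        ((∏ i ∈ range n, (α - i)) * ((α - n) * (1+x) ^ (α - n - 1) * 1)) x := by
      exact (((Real.hasDerivAt_rpow_const (p := α - n) (Or.inl h1.ne')).comp x
        ((hasDerivAt_id x).const_add 1))).const_mul _
    rw [hd.hasDerivWithinAt.derivWithin hu]
    have hc : α - ((n+1 : ℕ) : ℝ) = α - n - 1 := by push_cast; ring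
    rw [hc, Finset.prod_range_succ]
    ring

lemma taylor_eval (α : ℝ) (n : ℕ) :
    taylorWithinEval (fun t : ℝ => (1+t) ^ α) n (Icc (0:ℝ) 1) 0 1
      = ∑ k ∈ range (n+1), genBinom α k := by
  rw [taylor_within_apply]
  apply Finset.sum_congr rfl
  intro k _
  rw [iter_deriv α k 0 (by norm_num)]
  simp [genBinom, Real.one_rpow, smul_eq_mul]
  rw [div_eq_inv_mul]

lemma taylor_bound {α : ℝ} (hα0 : 0 < α) (hα1 : α < 1) (n : ℕ) :
    |(2:ℝ) ^ α - ∑ k ∈ range (n+1), genBinom α k| ≤ α / (n+1) := by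
  have hdiff : DifferentiableOn ℝ
      (iteratedDerivWithin n (fun t : ℝ => (1+t) ^ α) (Icc (0:ℝ) 1)) (Ioo (0:ℝ) 1) := by
    apply DifferentiableOn.congr
      (f := fun y : ℝ => (∏ i ∈ range n, (α - i)) * (1+y) ^ (α - n))
    · intro y hy
      have h1 : (0:ℝ) < 1 + y := by have := hy.1; linarith
      exact (((Real.hasDerivAt_rpow_const (p := α - n) (Or.inl h1.ne')).comp y
        ((hasDerivAt_id y).const_add 1)).const_mul
        (∏ i ∈ range n, (α - i))).differentiableAt.differentiableWithinAt
    · intro y hy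
      exact iter_deriv α n y (Ioo_subset_Icc_self hy)
  obtain ⟨x', hx', heq⟩ := taylor_mean_remainder_lagrange (f := fun t : ℝ => (1+t) ^ α)
    (x₀ := 0) (x := 1) (n := n) (by norm_num) (by rw [Set.uIcc_of_le zero_le_one]; exact contDiffOn_f α n)
    (by rw [Set.uIcc_of_le zero_le_one, Set.uIoo_of_le zero_le_one]; exact hdiff)
  rw [Set.uIcc_of_le zero_le_one] at heq
  rw [Set.uIoo_of_le zero_le_one] at hx'
  rw [taylor_eval, iter_deriv α (n+1) x' (Ioo_subset_Icc_self hx')] at heq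
  have hf1 : ((1:ℝ)+1) ^ α = (2:ℝ) ^ α := by norm_num
  rw [hf1] at heq
  rw [heq]
  have hx0 : (0:ℝ) < 1 + x' := by have := hx'.1; linarith
  have hprod : |(∏ i ∈ range (n+1), (α - i)) / ((n+1).factorial : ℝ)| = D α n := by
    rw [show (∏ i ∈ range (n+1), (α - i)) / ((n+1).factorial : ℝ) = genBinom α (n+1) from rfl,
      genBinom_eq_D]
    rw [abs_mul, abs_pow, abs_neg, abs_one, one_pow, one_mul,
      abs_of_pos (D_pos hα0 hα1 n)]
  have hrpow : (1+x') ^ (α - ((n+1:ℕ):ℝ)) ≤ 1 := by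
    apply Real.rpow_le_one_of_one_le_of_nonpos
    · linarith [hx'.1]
    · have : (1:ℝ) ≤ ((n+1:ℕ):ℝ) := by push_cast; linarith [Nat.cast_nonneg (α := ℝ) n]
      linarith
  have hrpow0 : (0:ℝ) ≤ (1+x') ^ (α - ((n+1:ℕ):ℝ)) := Real.rpow_nonneg (by linarith) _
  calc |(∏ i ∈ range (n+1), (α - i)) * (1+x') ^ (α - ((n+1:ℕ):ℝ)) * (1-0)^(n+1) / (((n+1).factorial) : ℝ)|
      = |(∏ i ∈ range (n+1), (α - i)) / ((n+1).factorial : ℝ)| * (1+x') ^ (α - ((n+1:ℕ):ℝ)) := by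
        have he : (∏ i ∈ range (n+1), (α - i)) * (1+x') ^ (α - ((n+1:ℕ):ℝ)) * (1-0)^(n+1)
              / ((n+1).factorial : ℝ)
            = ((∏ i ∈ range (n+1), (α - i)) / ((n+1).factorial : ℝ))
              * (1+x') ^ (α - ((n+1:ℕ):ℝ)) := by ring
        rw [he, abs_mul, abs_of_nonneg hrpow0]
    _ ≤ D α n * 1 := by
        rw [hprod]
        exact mul_le_mul_of_nonneg_left hrpow (D_pos hα0 hα1 n).le
    _ ≤ α / (n+1) := by rw [mul_one]; exact_mod_cast D_le hα0 hα1 n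

end TaylorPart
section Limits

lemma A_tendsto {α : ℝ} (hα0 : 0 < α) (hα1 : α < 1) :
    Tendsto (fun n : ℕ => ∑ k ∈ range (n+1), genBinom α k) atTop (𝓝 ((2:ℝ) ^ α)) := by
  rw [← tendsto_sub_nhds_zero_iff]
  apply squeeze_zero_norm (a := fun n : ℕ => α / (n+1))
  · intro n
    rw [Real.norm_eq_abs, abs_sub_comm]
    exact taylor_bound hα0 hα1 n
  · have h := (tendsto_const_div_atTop_nhds_zero_nat α).comp (tendsto_add_atTop_nat 1)
    have : (fun n : ℕ => α / ((n:ℝ)+1)) = (fun n : ℕ => α / (n:ℝ)) ∘ (fun a => a + 1) := by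
      funext n
      simp only [Function.comp_apply]
      push_cast
      ring
    rw [this]
    exact h

lemma eK_tendsto {α : ℝ} (hα0 : 0 < α) (hα1 : α < 1) :
    Tendsto (fun K : ℕ => (-1:ℝ)^K * genBinom (α-1) K) atTop (𝓝 0) := by
  apply squeeze_zero_norm (a := fun K : ℕ => Real.exp (-α * ∑ i ∈ range K, (1 / ((i:ℝ)+1))))
  · intro K
    rw [Real.norm_eq_abs, gb_shift]
    have hnn : ∀ i ∈ range K, (0:ℝ) ≤ ((i:ℝ)+1-α) / ((i:ℝ)+1) := by
      intro i _
      have : (0:ℝ) < (i:ℝ)+1 := by positivity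
      apply div_nonneg _ this.le
      have : (0:ℝ) ≤ (i:ℝ) := Nat.cast_nonneg i
      linarith
    rw [abs_of_nonneg (Finset.prod_nonneg hnn)]
    rw [Finset.mul_sum, Real.exp_sum]
    apply Finset.prod_le_prod hnn
    intro i _
    have hpos : (0:ℝ) < (i:ℝ)+1 := by positivity
    have h1 : ((i:ℝ)+1-α) / ((i:ℝ)+1) = -(α / ((i:ℝ)+1)) + 1 := by
      field_simp
      ring
    have h2 := Real.add_one_le_exp (-(α / ((i:ℝ)+1)))
    rw [h1]
    convert h2 using 2
    · rfl
    · ring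
  · apply Real.tendsto_exp_atBot.comp
    exact Tendsto.const_mul_atTop_of_neg (by linarith)
      Real.tendsto_sum_range_one_div_nat_succ_atTop

lemma P_key (α : ℝ) (K : ℕ) : ∑ m ∈ range (2*K+1), hcoeff α m
    = (2:ℝ)^(-α) * ((∑ k ∈ range (2*K+1), genBinom α k) - 1
        - ∑ j ∈ range K, (-1:ℝ)^(j+1) * genBinom α (j+1)) := by
  induction K with
  | zero => simp [hcoeff, genBinom_zero]
  | succ K ih =>
    have hodd : hcoeff α (2*K+1) = (2:ℝ)^(-α) * genBinom α (2*K+1) := by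
      unfold hcoeff
      rw [if_neg (by omega), if_pos (by omega)]
    have heven : hcoeff α (2*K+1+1)
        = (2:ℝ)^(-α) * (genBinom α (2*K+2) - (-1:ℝ)^(K+1) * genBinom α (K+1)) := by
      unfold hcoeff
      rw [if_neg (by omega), if_neg (by omega),
        show (2*K+1+1)/2 = K+1 by omega, show 2*K+1+1 = 2*K+2 by omega]
    rw [show 2*(K+1)+1 = (2*K+1) + 1 + 1 by ring]
    rw [Finset.sum_range_succ, Finset.sum_range_succ (f := fun m => hcoeff α m), ih, hodd, heven]
    rw [Finset.sum_range_succ (n := 2*K+1+1), Finset.sum_range_succ (n := 2*K+1),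
      Finset.sum_range_succ (n := K), show 2*K+1+1 = 2*K+2 by omega]
    ring

end Limits
theorem stmt_13 (α : ℝ) (hα0 : 0 < α) (hα1 : α < 1) :
    (∀ m : ℕ, 0 ≤ hcoeff α m) ∧ HasSum (fun m : ℕ => hcoeff α m) 1 := by
  refine ⟨hcoeff_nonneg hα0 hα1, ?_⟩
  rw [hasSum_iff_tendsto_nat_of_nonneg (hcoeff_nonneg hα0 hα1) 1]
  have h2 : Tendsto (fun K : ℕ => 2*K) atTop atTop :=
    tendsto_atTop_atTop_of_monotone (fun a b h => by omega) (fun b => ⟨b, by omega⟩)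
  have h21 : Tendsto (fun K : ℕ => 2*K+1) atTop atTop :=
    tendsto_atTop_atTop_of_monotone (fun a b h => by omega) (fun b => ⟨b, by omega⟩)
  have hsub : Tendsto (fun K : ℕ => ∑ m ∈ range (2*K+1), hcoeff α m) atTop (𝓝 1) := by
    have e : (fun K : ℕ => ∑ m ∈ range (2*K+1), hcoeff α m)
        = fun K => (2:ℝ)^(-α) * ((∑ k ∈ range (2*K+1), genBinom α k) - 1
            - ((-1:ℝ)^K * genBinom (α-1) K - 1)) := by
      funext K
      rw [P_key, alt_sum]
    rw [e]
    have hA : Tendsto (fun K : ℕ => ∑ k ∈ range (2*K+1), genBinom α k)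
        atTop (𝓝 ((2:ℝ)^α)) := (A_tendsto hα0 hα1).comp h2
    have hE := eK_tendsto hα0 hα1
    have hlim : Tendsto (fun K : ℕ => (2:ℝ)^(-α) * ((∑ k ∈ range (2*K+1), genBinom α k) - 1
          - ((-1:ℝ)^K * genBinom (α-1) K - 1)))
        atTop (𝓝 ((2:ℝ)^(-α) * (((2:ℝ)^α - 1) - (0 - 1)))) :=
      ((hA.sub (tendsto_const_nhds (x := (1:ℝ)))).sub
        (hE.sub (tendsto_const_nhds (x := (1:ℝ))))).const_mul _
    have hval : (2:ℝ)^(-α) * (((2:ℝ)^α - 1) - (0 - 1)) = 1 := by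
      rw [show ((2:ℝ)^α - 1) - (0 - 1) = (2:ℝ)^α by ring,
        ← Real.rpow_add (by norm_num : (0:ℝ) < 2)]
      simp
    rw [hval] at hlim
    exact hlim
  have hmono : Monotone (fun n : ℕ => ∑ m ∈ range n, hcoeff α m) := by
    apply monotone_nat_of_le_succ
    intro n
    rw [Finset.sum_range_succ]
    have := hcoeff_nonneg hα0 hα1 n
    linarith
  rcases tendsto_of_monotone hmono with h | ⟨L, hL⟩
  · exact absurd hsub (not_tendsto_nhds_of_tendsto_atTop (h.comp h21) 1)
  · have hL1 : L = 1 := tendsto_nhds_unique (hL.comp h21) hsub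
    rwa [hL1] at hL
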